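/- Let V be a finite-dimensional complex vector space and σ : V ⊗ V → V ⊗ V a linear map satisfying σ² = 1 and the braid equation (σ ⊗ id)(id ⊗ σ)(σ ⊗ id) = (id ⊗ σ)(σ ⊗ id)(id ⊗ σ) on V ⊗ V ⊗ V. Let P = (1 + σ)/2 and let S = ker(σ - 1) = ran(P). Then the map P₂₃ = id_V ⊗ P restricts to a linear isomorphism from S ⊗ V onto V ⊗ S, where S ⊗ V and V ⊗ S are viewed as subspaces of V ⊗ V ⊗ V. -/

import Mathlib

open scoped TensorProduct

/-- `σ ⊗ id` on `(V ⊗ V) ⊗ V`. -/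
noncomputable def sigma12 {V : Type} [AddCommGroup V] [Module ℂ V]
    (σ : Module.End ℂ (V ⊗[ℂ] V)) : Module.End ℂ ((V ⊗[ℂ] V) ⊗[ℂ] V) :=
  TensorProduct.map σ LinearMap.id

/-- `id ⊗ σ` on `(V ⊗ V) ⊗ V`, acting on the last two tensor factors. -/
noncomputable def sigma23 {V : Type} [AddCommGroup V] [Module ℂ V]
    (σ : Module.End ℂ (V ⊗[ℂ] V)) : Module.End ℂ ((V ⊗[ℂ] V) ⊗[ℂ] V) :=
  (TensorProduct.assoc ℂ V V V).symm.toLinearMap ∘ₗ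
    (TensorProduct.map LinearMap.id σ) ∘ₗ (TensorProduct.assoc ℂ V V V).toLinearMap

/-- The subspace `S ⊗ V` of `(V ⊗ V) ⊗ V`, for `S ⊆ V ⊗ V`. -/
noncomputable def subSV {V : Type} [AddCommGroup V] [Module ℂ V]
    (S : Submodule ℂ (V ⊗[ℂ] V)) : Submodule ℂ ((V ⊗[ℂ] V) ⊗[ℂ] V) :=
  LinearMap.range (TensorProduct.map S.subtype (LinearMap.id (R := ℂ) (M := V)))

/-- The subspace `V ⊗ S` of `(V ⊗ V) ⊗ V`, for `S ⊆ V ⊗ V`. -/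
noncomputable def subVS {V : Type} [AddCommGroup V] [Module ℂ V]
    (S : Submodule ℂ (V ⊗[ℂ] V)) : Submodule ℂ ((V ⊗[ℂ] V) ⊗[ℂ] V) :=
  LinearMap.range ((TensorProduct.assoc ℂ V V V).symm.toLinearMap ∘ₗ
    TensorProduct.map (LinearMap.id (R := ℂ) (M := V)) S.subtype)

section aux
variable {V : Type} [AddCommGroup V] [Module ℂ V]

-- sigma23 is additive / smul friendly
lemma sigma23_add (a b : Module.End ℂ (V ⊗[ℂ] V)) :
    sigma23 (a + b) = sigma23 a + sigma23 b := by
  unfold sigma23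
  ext x y z
  simp [TensorProduct.map_add_right]

lemma sigma23_smul (c : ℂ) (a : Module.End ℂ (V ⊗[ℂ] V)) :
    sigma23 (c • a) = c • sigma23 a := by
  unfold sigma23
  ext x y z
  simp [TensorProduct.map_smul_right]

lemma sigma23_one : sigma23 (1 : Module.End ℂ (V ⊗[ℂ] V)) = 1 := by
  unfold sigma23
  ext x y z
  simp

end aux
section main
variable {V : Type} [AddCommGroup V] [Module ℂ V] [FiniteDimensional ℂ V]
variable (σ : Module.End ℂ (V ⊗[ℂ] V))

-- σ fixes elements of S = ker (σ - 1)
lemma sigma_comp_subtype :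
    σ ∘ₗ (LinearMap.ker (σ - 1)).subtype = (LinearMap.ker (σ - 1)).subtype := by
  ext ⟨s, hs⟩
  have : (σ - 1) s = 0 := hs
  simpa [LinearMap.sub_apply, sub_eq_zero] using this

lemma sigma12_fix_subSV {x : (V ⊗[ℂ] V) ⊗[ℂ] V}
    (hx : x ∈ subSV (LinearMap.ker (σ - 1))) : sigma12 σ x = x := by
  obtain ⟨z, rfl⟩ := hx
  have : sigma12 σ ∘ₗ TensorProduct.map (LinearMap.ker (σ - 1)).subtype
      (LinearMap.id (R := ℂ) (M := V)) =
      TensorProduct.map (LinearMap.ker (σ - 1)).subtype (LinearMap.id (R := ℂ) (M := V)) := by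
    unfold sigma12
    rw [← TensorProduct.map_comp, sigma_comp_subtype]
    simp
  exact LinearMap.congr_fun this z

end main
section main2
variable {V : Type} [AddCommGroup V] [Module ℂ V] [FiniteDimensional ℂ V]

set_option linter.unusedSectionVars false

lemma range_P_le (σ P : Module.End ℂ (V ⊗[ℂ] V)) (hinv : σ * σ = 1)
    (hP : P = (2 : ℂ)⁻¹ • (1 + σ)) (x : V ⊗[ℂ] V) :
    P x ∈ LinearMap.ker (σ - 1) := by
  have : (σ - 1) * P = 0 := by
    rw [hP]
    rw [mul_smul_comm]
    have h : (σ - 1) * (1 + σ) = 0 := by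
      have h2 : σ * σ = 1 := hinv
      have : (σ - 1) * (1 + σ) = σ * σ - 1 := by
        rw [sub_mul, mul_add, mul_add, mul_one, one_mul, one_mul]
        abel
      rw [this, h2, sub_self]
    rw [h, smul_zero]
  have := LinearMap.congr_fun this x
  simpa [Module.End.mul_apply] using this

lemma mapsto_sub (σ P : Module.End ℂ (V ⊗[ℂ] V)) (hinv : σ * σ = 1)
    (hP : P = (2 : ℂ)⁻¹ • (1 + σ)) (x : (V ⊗[ℂ] V) ⊗[ℂ] V) :
    sigma23 P x ∈ subVS (LinearMap.ker (σ - 1)) := by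
  set S := LinearMap.ker (σ - 1)
  -- P = S.subtype ∘ P'
  set P' : (V ⊗[ℂ] V) →ₗ[ℂ] S := LinearMap.codRestrict S P (range_P_le σ P hinv hP)
  have hfac : P = S.subtype ∘ₗ P' := rfl
  refine ⟨TensorProduct.map (LinearMap.id (R := ℂ) (M := V)) P'
    ((TensorProduct.assoc ℂ V V V) x), ?_⟩
  show ((TensorProduct.assoc ℂ V V V).symm.toLinearMap)
      (TensorProduct.map LinearMap.id S.subtype
        (TensorProduct.map LinearMap.id P' ((TensorProduct.assoc ℂ V V V) x))) = _
  rw [← LinearMap.comp_apply (TensorProduct.map LinearMap.id S.subtype),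
    ← TensorProduct.map_comp, ← hfac]
  · rfl

lemma finrank_subSV (S : Submodule ℂ (V ⊗[ℂ] V)) :
    Module.finrank ℂ (subSV (V := V) S) = Module.finrank ℂ S * Module.finrank ℂ V := by
  have hinj : Function.Injective
      (TensorProduct.map S.subtype (LinearMap.id (R := ℂ) (M := V))) := by
    have : TensorProduct.map S.subtype (LinearMap.id (R := ℂ) (M := V)) =
        LinearMap.rTensor V S.subtype := rfl
    rw [this]
    exact Module.Flat.rTensor_preserves_injective_linearMap _ S.injective_subtype
  rw [subSV, LinearMap.finrank_range_of_inj hinj, Module.finrank_tensorProduct]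

lemma finrank_subVS (S : Submodule ℂ (V ⊗[ℂ] V)) :
    Module.finrank ℂ (subVS (V := V) S) = Module.finrank ℂ V * Module.finrank ℂ S := by
  have hinj : Function.Injective
      ((TensorProduct.assoc ℂ V V V).symm.toLinearMap ∘ₗ
        TensorProduct.map (LinearMap.id (R := ℂ) (M := V)) S.subtype) := by
    apply Function.Injective.comp (TensorProduct.assoc ℂ V V V).symm.injective
    have : TensorProduct.map (LinearMap.id (R := ℂ) (M := V)) S.subtype =
        LinearMap.lTensor V S.subtype := rfl
    rw [this]
    exact Module.Flat.lTensor_preserves_injective_linearMap _ S.injective_subtype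
  rw [subVS, LinearMap.finrank_range_of_inj hinj, Module.finrank_tensorProduct]

end main2

section thm
variable {V : Type} [AddCommGroup V] [Module ℂ V] [FiniteDimensional ℂ V]
set_option linter.unusedSectionVars false

lemma sigma23_P_eq (σ P : Module.End ℂ (V ⊗[ℂ] V)) (hP : P = (2 : ℂ)⁻¹ • (1 + σ)) :
    sigma23 P = (2 : ℂ)⁻¹ • (1 + sigma23 σ) := by
  rw [hP, sigma23_smul, sigma23_add, sigma23_one]

lemma key_inj (σ : Module.End ℂ (V ⊗[ℂ] V)) (hinv : σ * σ = 1)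
    (hbraid : sigma12 σ * sigma23 σ * sigma12 σ = sigma23 σ * sigma12 σ * sigma23 σ)
    (P : Module.End ℂ (V ⊗[ℂ] V)) (hP : P = (2 : ℂ)⁻¹ • (1 + σ))
    (t : (V ⊗[ℂ] V) ⊗[ℂ] V) (ht : t ∈ subSV (LinearMap.ker (σ - 1)))
    (h0 : sigma23 P t = 0) : t = 0 := by
  have h12 : sigma12 σ t = t := sigma12_fix_subSV σ ht
  have h23 : sigma23 σ t = -t := by
    have := h0
    rw [sigma23_P_eq σ P hP] at this
    have h2 : (1 + sigma23 σ) t = 0 := by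
      have := congrArg (fun z => (2 : ℂ) • z) this
      simpa [smul_smul] using this
    have := h2
    simp only [LinearMap.add_apply, Module.End.one_apply] at this
    exact eq_neg_of_add_eq_zero_right (by rwa [add_comm] at this)
  have hb := LinearMap.congr_fun hbraid t
  simp only [Module.End.mul_apply] at hb
  rw [h12, h23] at hb
  simp only [map_neg, h12, h23, neg_neg] at hb
  -- hb : -t = t
  have h2t : (2 : ℂ) • t = 0 := by
    rw [two_smul]
    nth_rewrite 1 [← hb]
    exact neg_add_cancel t
  have := congrArg (fun z => (2 : ℂ)⁻¹ • z) h2t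
  simpa [smul_smul] using this

end thm

/-- For an involutive braiding `σ` with symmetrizer `P = (1+σ)/2` and `S = ker (σ - 1)`,
the map `P₂₃ = id ⊗ P` restricts to a linear isomorphism from `S ⊗ V` onto `V ⊗ S`. -/
theorem stmt7 {V : Type} [AddCommGroup V] [Module ℂ V] [FiniteDimensional ℂ V]
    (σ : Module.End ℂ (V ⊗[ℂ] V))
    (hinv : σ * σ = 1)
    (hbraid : sigma12 σ * sigma23 σ * sigma12 σ = sigma23 σ * sigma12 σ * sigma23 σ)
    (P : Module.End ℂ (V ⊗[ℂ] V))
    (hP : P = (2 : ℂ)⁻¹ • (1 + σ)) :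
    Set.BijOn (fun x => sigma23 P x)
      (subSV (LinearMap.ker (σ - 1)) : Set ((V ⊗[ℂ] V) ⊗[ℂ] V))
      (subVS (LinearMap.ker (σ - 1)) : Set ((V ⊗[ℂ] V) ⊗[ℂ] V)) := by
  have hmt : ∀ x ∈ subSV (LinearMap.ker (σ - 1)), sigma23 P x ∈ subVS (LinearMap.ker (σ - 1)) :=
    fun x _ => mapsto_sub σ P hinv hP x
  have hinjOn : Set.InjOn (fun x => sigma23 P x)
      (subSV (LinearMap.ker (σ - 1)) : Set ((V ⊗[ℂ] V) ⊗[ℂ] V)) := by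
    intro a ha b hb hab
    have hmem : a - b ∈ subSV (LinearMap.ker (σ - 1)) := sub_mem ha hb
    have h0 : sigma23 P (a - b) = 0 := by
      rw [map_sub]
      simpa [sub_eq_zero] using hab
    have := key_inj σ hinv hbraid P hP (a - b) hmem h0
    exact sub_eq_zero.mp this
  refine ⟨hmt, hinjOn, ?_⟩
  -- surjectivity via dimension count
  let f : subSV (LinearMap.ker (σ - 1)) →ₗ[ℂ] subVS (LinearMap.ker (σ - 1)) :=
    (sigma23 P).restrict hmt
  have hfinj : Function.Injective f := by
    intro a b hab
    apply Subtype.ext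
    apply hinjOn a.2 b.2
    have := congrArg Subtype.val hab
    simpa [f, LinearMap.restrict_apply] using this
  have hdim : Module.finrank ℂ (subSV (V := V) (LinearMap.ker (σ - 1))) =
      Module.finrank ℂ (subVS (V := V) (LinearMap.ker (σ - 1))) := by
    rw [finrank_subSV, finrank_subVS, mul_comm]
  have hfsurj := (LinearMap.injective_iff_surjective_of_finrank_eq_finrank (V := subSV (LinearMap.ker (σ - 1)))
    (V₂ := subVS (LinearMap.ker (σ - 1))) hdim).mp hfinj
  intro y hy
  obtain ⟨x, hx⟩ := hfsurj ⟨y, hy⟩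
  refine ⟨x.1, x.2, ?_⟩
  have := congrArg Subtype.val hx
  simpa [f, LinearMap.restrict_apply] using this
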